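/- arXiv:2104.09589 — 5 statements merged into one kernel-verified Lean document; each statement's English description precedes it below -/
import Mathlib

section
/- Let v ∈ S_{2n} satisfy v(2n+1-i) = 2n+1-v(i) for all i. Then v is 123-avoiding if and only if there exist indices a_1 < a_2 < ... < a_n, each a left-to-right minimum of v, such that a_i + a_j ≠ 2n+1 for all i, j ∈ {1,...,n}. Moreover, in that case, setting b_i := 2n+1-a_{n+1-i}, the indices b_1 < ... < b_n are right-to-left maxima of v. -/
/-- `v` is 123-avoiding: there are no indices `i < j < k` with `v i < v j < v k`. -/
def Avoids123 {m : ℕ} (v : Equiv.Perm (Fin m)) : Prop :=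
  ¬ ∃ i j k : Fin m, i < j ∧ j < k ∧ v i < v j ∧ v j < v k

/-- `a` is a left-to-right minimum of `v`: `v i > v a` for all `i < a`. -/
def IsLtrMin {m : ℕ} (v : Equiv.Perm (Fin m)) (a : Fin m) : Prop :=
  ∀ i, i < a → v a < v i

/-- `b` is a right-to-left maximum of `v`: `v k < v b` for all `k > b`. -/
def IsRtlMax {m : ℕ} (v : Equiv.Perm (Fin m)) (b : Fin m) : Prop :=
  ∀ k, b < k → v k < v b

lemma avoids_iff_all {m : ℕ} (v : Equiv.Perm (Fin m)) :
    Avoids123 v ↔ ∀ j, IsLtrMin v j ∨ IsRtlMax v j := by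
  constructor
  · intro h j
    by_contra hc
    push_neg at hc
    obtain ⟨h1, h2⟩ := hc
    simp only [IsLtrMin, not_forall, not_lt] at h1
    simp only [IsRtlMax, not_forall, not_lt] at h2
    obtain ⟨i, hij, hvi⟩ := h1
    obtain ⟨k, hjk, hvk⟩ := h2
    refine h ⟨i, j, k, hij, hjk, ?_, ?_⟩
    · exact lt_of_le_of_ne hvi (v.injective.ne (ne_of_lt hij))
    · exact lt_of_le_of_ne hvk (v.injective.ne (ne_of_lt hjk))
  · rintro h ⟨i, j, k, hij, hjk, h1, h2⟩
    rcases h j with hl | hr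
    · exact absurd (hl i hij) (not_lt.mpr h1.le)
    · exact absurd (hr k hjk) (not_lt.mpr h2.le)

lemma ltr_to_rtl {m : ℕ} (v : Equiv.Perm (Fin m))
    (hv : ∀ i, v (Fin.rev i) = Fin.rev (v i)) {a : Fin m}
    (ha : IsLtrMin v a) : IsRtlMax v (Fin.rev a) := by
  intro k hk
  have hk' : Fin.rev k < a := by
    rw [← Fin.rev_rev a]; exact Fin.rev_lt_rev.mpr hk
  have h1 : v a < v (Fin.rev k) := ha _ hk'
  have h2 : v k = Fin.rev (v (Fin.rev k)) := by
    rw [← hv, Fin.rev_rev]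
  rw [hv a, h2]
  exact Fin.rev_lt_rev.mpr h1

lemma rtl_to_ltr {m : ℕ} (v : Equiv.Perm (Fin m))
    (hv : ∀ i, v (Fin.rev i) = Fin.rev (v i)) {b : Fin m}
    (hb : IsRtlMax v b) : IsLtrMin v (Fin.rev b) := by
  intro k hk
  have hk' : b < Fin.rev k := by
    rw [← Fin.rev_rev b]; exact Fin.rev_lt_rev.mpr hk
  have h1 : v (Fin.rev k) < v b := hb _ hk'
  have h2 : v k = Fin.rev (v (Fin.rev k)) := by
    rw [← hv, Fin.rev_rev]
  rw [hv b, h2]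
  exact Fin.rev_lt_rev.mpr h1

lemma rev_ne_self {n : ℕ} (j : Fin (2 * n)) : Fin.rev j ≠ j := by
  intro h
  have h1 := congrArg Fin.val h
  have h2 := j.isLt
  rw [Fin.val_rev] at h1
  omega

/-- For `v ∈ S_{2n}` with `v(2n+1-i) = 2n+1-v(i)`: `v` is 123-avoiding iff there
exist increasing indices `a₁ < ⋯ < aₙ`, each a left-to-right minimum, with
`a_i + a_j ≠ 2n+1` (i.e. `a i ≠ rev (a j)`) for all `i, j`.  Moreover, in that case
the indices `b_i := 2n+1 - a_{n+1-i}` are increasing right-to-left maxima of `v`. -/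
theorem stmt4 (n : ℕ) (v : Equiv.Perm (Fin (2 * n)))
    (hv : ∀ i, v (Fin.rev i) = Fin.rev (v i)) :
    (Avoids123 v ↔ ∃ a : Fin n → Fin (2 * n), StrictMono a ∧
        (∀ i, IsLtrMin v (a i)) ∧ (∀ i j, a i ≠ Fin.rev (a j))) ∧
    (∀ a : Fin n → Fin (2 * n), StrictMono a →
        (∀ i, IsLtrMin v (a i)) → (∀ i j, a i ≠ Fin.rev (a j)) →
        StrictMono (fun i : Fin n => Fin.rev (a (Fin.rev i))) ∧
        ∀ i : Fin n, IsRtlMax v (Fin.rev (a (Fin.rev i)))) := by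
  classical
  constructor
  · constructor
    · -- forward
      intro hav
      rw [avoids_iff_all] at hav
      set e : Fin n → Fin (2 * n) := fun i => ⟨i.val, by omega⟩ with he
      set c : Fin n → Fin (2 * n) :=
        fun i => if IsLtrMin v (e i) then e i else Fin.rev (e i) with hc
      have hcval : ∀ i : Fin n, (c i).val = i.val ∨ (c i).val = 2 * n - (i.val + 1) := by
        intro i
        by_cases h : IsLtrMin v (e i)
        · left; simp only [hc, if_pos h]; simp [he]
        · right; simp only [hc, if_neg h]; simp [he, Fin.val_rev]
      have hcltr : ∀ i : Fin n, IsLtrMin v (c i) := by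
        intro i
        by_cases h : IsLtrMin v (e i)
        · simp only [hc, if_pos h]; exact h
        · have : IsRtlMax v (e i) := (hav (e i)).resolve_left h
          simpa [hc, h] using rtl_to_ltr v hv this
      have hcinj : Function.Injective c := by
        intro i j hij
        have hi := i.isLt; have hj := j.isLt
        have := congrArg Fin.val hij
        rcases hcval i with h1 | h1 <;> rcases hcval j with h2 | h2 <;>
          (apply Fin.ext; omega)
      have hcard : (Finset.image c Finset.univ).card = n := by
        rw [Finset.card_image_of_injective _ hcinj, Finset.card_univ, Fintype.card_fin]
      refine ⟨fun i => (Finset.image c Finset.univ).orderEmbOfFin hcard i,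
        ((Finset.image c Finset.univ).orderEmbOfFin hcard).strictMono, ?_, ?_⟩
      · intro i
        obtain ⟨p, _, hp⟩ := Finset.mem_image.mp
          ((Finset.image c Finset.univ).orderEmbOfFin_mem hcard i)
        show IsLtrMin v ((Finset.image c Finset.univ).orderEmbOfFin hcard i)
        have h := hcltr p
        rwa [hp] at h
      · intro i j hij
        have hij' : (Finset.image c Finset.univ).orderEmbOfFin hcard i
            = Fin.rev ((Finset.image c Finset.univ).orderEmbOfFin hcard j) := hij
        obtain ⟨p, _, hp⟩ := Finset.mem_image.mp
          ((Finset.image c Finset.univ).orderEmbOfFin_mem hcard i)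
        obtain ⟨q, _, hq⟩ := Finset.mem_image.mp
          ((Finset.image c Finset.univ).orderEmbOfFin_mem hcard j)
        have hkey : c p = Fin.rev (c q) := by rw [hp, hq]; exact hij'
        have hval := congrArg Fin.val hkey
        rw [Fin.val_rev] at hval
        have hp' := p.isLt; have hq' := q.isLt
        have hcq := (c q).isLt
        have hpq : p = q := by
          rcases hcval p with h1 | h1 <;> rcases hcval q with h2 | h2 <;>
            (apply Fin.ext; omega)
        rw [hpq] at hkey
        exact rev_ne_self (c q) hkey.symm
    · -- backward
      rintro ⟨a, ha, hltr, hne⟩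
      rw [avoids_iff_all]
      intro j
      have hainj : Function.Injective a := ha.injective
      set A : Finset (Fin (2 * n)) :=
        Finset.image a Finset.univ ∪ Finset.image (Fin.rev ∘ a) Finset.univ with hA
      have hdisj : Disjoint (Finset.image a (Finset.univ : Finset (Fin n)))
          (Finset.image (Fin.rev ∘ a) Finset.univ) := by
        rw [Finset.disjoint_left]
        intro x hx hx'
        rw [Finset.mem_image] at hx hx'
        obtain ⟨p, _, hp⟩ := hx
        obtain ⟨q, _, hq⟩ := hx'
        exact hne p q (hp.trans hq.symm)
      have hcardA : A.card = 2 * n := by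
        rw [hA, Finset.card_union_of_disjoint hdisj,
          Finset.card_image_of_injective _ hainj,
          Finset.card_image_of_injective _ (Fin.rev_injective.comp hainj),
          Finset.card_univ, Fintype.card_fin]
        ring
      have hAuniv : A = Finset.univ := by
        apply Finset.eq_univ_of_card
        rw [hcardA, Fintype.card_fin]
      have hj : j ∈ A := hAuniv ▸ Finset.mem_univ j
      rw [hA, Finset.mem_union, Finset.mem_image, Finset.mem_image] at hj
      rcases hj with ⟨p, _, hp⟩ | ⟨p, _, hp⟩
      · left; rw [← hp]; exact hltr p
      · right; rw [← hp]; exact ltr_to_rtl v hv (hltr p)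
  · -- moreover
    intro a ha hltr _
    constructor
    · intro i j hij
      exact Fin.rev_lt_rev.mpr (ha (Fin.rev_lt_rev.mpr hij))
    · intro i
      exact ltr_to_rtl v hv (hltr (Fin.rev i))
end

section
/- Let w ∈ S_{2n} satisfy w(2n+1-i) = 2n+1-w(i) for all i, and define the type-A essential set E^A(w) = {(p,q) : 2 ≤ p ≤ 2n, 1 ≤ q ≤ 2n-1, w(q) < p ≤ w(q+1), and w^{-1}(p-1) ≤ q < w^{-1}(p)}. Then (p,q) ∈ E^A(w) implies (2n+2-p, 2n-q) ∈ E^A(w). -/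
/-- For a permutation `w` of `{1,…,2n}` (modelled as a function `w : ℕ → ℕ`
bijective on `Icc 1 (2n)` with inverse `winv` there) satisfying the type-C
symmetry `w(2n+1-i) = 2n+1-w(i)`, the type-A essential set
`E^A(w) = {(p,q) : 2 ≤ p ≤ 2n, 1 ≤ q ≤ 2n-1, w(q) < p ≤ w(q+1),
w⁻¹(p-1) ≤ q < w⁻¹(p)}` is closed under `(p,q) ↦ (2n+2-p, 2n-q)`. -/
theorem stmt7 (n : ℕ) (hn : 1 ≤ n) (w winv : ℕ → ℕ)
    (hwmem : ∀ i ∈ Finset.Icc 1 (2 * n), w i ∈ Finset.Icc 1 (2 * n))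
    (hwinvmem : ∀ i ∈ Finset.Icc 1 (2 * n), winv i ∈ Finset.Icc 1 (2 * n))
    (hinv1 : ∀ i ∈ Finset.Icc 1 (2 * n), winv (w i) = i)
    (hinv2 : ∀ i ∈ Finset.Icc 1 (2 * n), w (winv i) = i)
    (hsym : ∀ i ∈ Finset.Icc 1 (2 * n), w (2 * n + 1 - i) = 2 * n + 1 - w i)
    (p q : ℕ)
    (h : 2 ≤ p ∧ p ≤ 2 * n ∧ 1 ≤ q ∧ q ≤ 2 * n - 1 ∧
      w q < p ∧ p ≤ w (q + 1) ∧ winv (p - 1) ≤ q ∧ q < winv p) :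
    2 ≤ 2 * n + 2 - p ∧ 2 * n + 2 - p ≤ 2 * n ∧ 1 ≤ 2 * n - q ∧
      2 * n - q ≤ 2 * n - 1 ∧
      w (2 * n - q) < 2 * n + 2 - p ∧ 2 * n + 2 - p ≤ w (2 * n - q + 1) ∧
      winv (2 * n + 2 - p - 1) ≤ 2 * n - q ∧ 2 * n - q < winv (2 * n + 2 - p) := by
  obtain ⟨h1, h2, h3, h4, h5, h6, h7, h8⟩ := h
  have hq : q ∈ Finset.Icc 1 (2 * n) := by simp only [Finset.mem_Icc]; omega
  have hq1 : q + 1 ∈ Finset.Icc 1 (2 * n) := by simp only [Finset.mem_Icc]; omega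
  have hp : p ∈ Finset.Icc 1 (2 * n) := by simp only [Finset.mem_Icc]; omega
  have hp1 : p - 1 ∈ Finset.Icc 1 (2 * n) := by simp only [Finset.mem_Icc]; omega
  have hsyminv : ∀ j ∈ Finset.Icc 1 (2 * n), winv (2 * n + 1 - j) = 2 * n + 1 - winv j := by
    intro j hj
    have hij := hwinvmem j hj
    have hmem : (2 * n + 1 - winv j) ∈ Finset.Icc 1 (2 * n) := by
      simp only [Finset.mem_Icc] at hij ⊢; omega
    have hs := hsym (winv j) hij
    rw [hinv2 j hj] at hs
    calc winv (2 * n + 1 - j) = winv (w (2 * n + 1 - winv j)) := by rw [hs]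
      _ = 2 * n + 1 - winv j := hinv1 _ hmem
  have hA : w (2 * n - q) = 2 * n + 1 - w (q + 1) := by
    have := hsym (q + 1) hq1
    have e : 2 * n + 1 - (q + 1) = 2 * n - q := by omega
    rwa [e] at this
  have hB : w (2 * n - q + 1) = 2 * n + 1 - w q := by
    have := hsym q hq
    have e : 2 * n + 1 - q = 2 * n - q + 1 := by omega
    rwa [e] at this
  have hC : winv (2 * n + 2 - p - 1) = 2 * n + 1 - winv p := by
    have := hsyminv p hp
    have e : 2 * n + 1 - p = 2 * n + 2 - p - 1 := by omega
    rwa [e] at this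
  have hD : winv (2 * n + 2 - p) = 2 * n + 1 - winv (p - 1) := by
    have := hsyminv (p - 1) hp1
    have e : 2 * n + 1 - (p - 1) = 2 * n + 2 - p := by omega
    rwa [e] at this
  have b1 := hwmem q hq
  have b2 := hwmem (q + 1) hq1
  have b3 := hwinvmem p hp
  have b4 := hwinvmem (p - 1) hp1
  simp only [Finset.mem_Icc] at b1 b2 b3 b4
  refine ⟨by omega, by omega, by omega, by omega, by omega, by omega, by omega, by omega⟩
end

section
/- Let r ≥ 1, let {x_{ij} : 1 ≤ i ≤ j ≤ r} be independent commuting indeterminates, and let N be the r×r 'generic symmetric matrix' with N_{ij} = x_{min(i,j), max(i,j)}. Then every nonzero coefficient of the polynomial det(N) ∈ ℤ[x_{ij}] is of the form ±2^k for some k ≥ 0. In particular, every monomial of the form ∏_{j=1}^r N_{j, u(j)} for u ∈ S_r appears in det(N) with nonzero coefficient. -/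
open MvPolynomial

section Aux

open Equiv Finset

variable {r : ℕ}

private lemma perm_apply_inv_self {α : Type*} (u : Perm α) (a : α) : u (u⁻¹ a) = a :=
  Equiv.apply_symm_apply u a

private lemma perm_inv_apply_self {α : Type*} (u : Perm α) (a : α) : u⁻¹ (u a) = a :=
  Equiv.symm_apply_apply u a

private def ee (i j : Fin r) : Fin r × Fin r := (min i j, max i j)

private lemma ee_comm (i j : Fin r) : ee i j = ee j i := by
  simp [ee, min_comm, max_comm]

private lemma pair_eq {i j k l : Fin r} (h : ee i j = ee k l) :
    (i = k ∧ j = l) ∨ (i = l ∧ j = k) := by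
  simp only [ee, Prod.mk.injEq, _root_.min_def, _root_.max_def] at h
  split_ifs at h <;> obtain ⟨h1, h2⟩ := h <;> tauto

private noncomputable def MM (u : Perm (Fin r)) : (Fin r × Fin r) →₀ ℕ :=
  ∑ j, Finsupp.single (ee j (u j)) 1

private lemma MM_apply (u : Perm (Fin r)) (p : Fin r × Fin r) :
    MM u p = (univ.filter (fun j => ee j (u j) = p)).card := by
  rw [MM, Finsupp.finset_sum_apply, Finset.card_filter]
  exact Finset.sum_congr rfl fun j _ => by rw [Finsupp.single_apply]

private lemma alt_lemma (u v : Perm (Fin r)) (h : MM v = MM u) (a : Fin r) :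
    v a = u a ∨ v a = u⁻¹ a := by
  have h2 : 0 < (univ.filter (fun j => ee j (v j) = ee a (v a))).card :=
    Finset.card_pos.2 ⟨a, by simp⟩
  rw [← MM_apply, h, MM_apply] at h2
  obtain ⟨j, hj⟩ := Finset.card_pos.1 h2
  simp only [Finset.mem_filter] at hj
  rcases pair_eq hj.2 with ⟨rfl, h3⟩ | ⟨h3, h4⟩
  · exact Or.inl h3.symm
  · right
    have h5 : u⁻¹ a = j := by rw [← h4, perm_inv_apply_self]
    rw [h5]
    exact h3.symm

private lemma fwd_lemma (u v : Perm (Fin r)) (h : MM v = MM u) (a : Fin r)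
    (h1 : v a ≠ u a) : v (u a) ≠ u (u a) := by
  intro h2
  have hva : v a = u⁻¹ a := (alt_lemma u v h a).resolve_left h1
  have hne : u a ≠ u⁻¹ a := fun e => h1 (by rw [hva, ← e])
  have h3 : u (u a) ≠ a := by
    intro e
    exact hne (u.injective (by rw [perm_apply_inv_self, e]))
  have key := congrArg (fun φ : (Fin r × Fin r) →₀ ℕ => φ (ee a (u a))) h
  simp only [MM_apply] at key
  have hu_set : univ.filter (fun j => ee j (u j) = ee a (u a)) = {a} := by
    ext j
    simp only [Finset.mem_filter, Finset.mem_univ, true_and, Finset.mem_singleton]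
    constructor
    · intro hj
      rcases pair_eq hj with ⟨rfl, -⟩ | ⟨rfl, h4⟩
      · rfl
      · exact absurd h4 h3
    · rintro rfl; rfl
  have hv_set : univ.filter (fun j => ee j (v j) = ee a (u a)) = ∅ := by
    ext j
    simp only [Finset.mem_filter, Finset.mem_univ, true_and, Finset.notMem_empty,
      iff_false]
    intro hj
    rcases pair_eq hj with ⟨rfl, h4⟩ | ⟨rfl, h4⟩
    · exact h1 h4
    · exact h3 (h2.symm.trans h4)
  rw [hu_set, hv_set] at key
  simp at key

private lemma bwd_lemma (u v : Perm (Fin r)) (h : MM v = MM u) (a : Fin r)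
    (h1 : v a ≠ u a) : v (u⁻¹ a) ≠ a := by
  intro h2
  have hva : v a = u⁻¹ a := (alt_lemma u v h a).resolve_left h1
  have hne : u a ≠ u⁻¹ a := fun e => h1 (by rw [hva, ← e])
  have hab : a ≠ u⁻¹ a := by
    intro e
    have e2 : u a = a := by conv_lhs => rw [e, perm_apply_inv_self]
    exact hne (e2.trans e)
  have key := congrArg (fun φ : (Fin r × Fin r) →₀ ℕ => φ (ee a (u⁻¹ a))) h
  simp only [MM_apply] at key
  have hu_set : univ.filter (fun j => ee j (u j) = ee a (u⁻¹ a)) = {u⁻¹ a} := by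
    ext j
    simp only [Finset.mem_filter, Finset.mem_univ, true_and, Finset.mem_singleton]
    constructor
    · intro hj
      rcases pair_eq hj with ⟨rfl, h4⟩ | ⟨rfl, -⟩
      · exact absurd h4 hne
      · rfl
    · rintro rfl
      rw [perm_apply_inv_self, ee_comm]
  have hsub : ({a, u⁻¹ a} : Finset (Fin r)) ⊆
      univ.filter (fun j => ee j (v j) = ee a (u⁻¹ a)) := by
    intro j hj
    simp only [Finset.mem_insert, Finset.mem_singleton] at hj
    rcases hj with rfl | rfl
    · simp only [Finset.mem_filter, Finset.mem_univ, true_and]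
      rw [hva]
    · simp only [Finset.mem_filter, Finset.mem_univ, true_and]
      rw [h2, ee_comm]
  have h5 : 2 ≤ (univ.filter (fun j => ee j (v j) = ee a (u⁻¹ a))).card := by
    calc 2 = ({a, u⁻¹ a} : Finset (Fin r)).card := (Finset.card_pair hab).symm
    _ ≤ _ := Finset.card_le_card hsub
  rw [key, hu_set] at h5
  simp at h5

private def pw (u w : Perm (Fin r)) (S : Fin r → Prop) [DecidablePred S]
    (hu : ∀ a, S a ↔ S (u a)) (hw : ∀ a, S a ↔ S (w a)) : Perm (Fin r) where
  toFun a := if S a then u a else w a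
  invFun a := if S a then u⁻¹ a else w⁻¹ a
  left_inv a := by
    by_cases h : S a
    · have h2 : S (u a) := (hu a).1 h
      simp [h, h2]
    · have h2 : ¬ S (w a) := fun h' => h ((hw a).2 h')
      simp [h, h2]
  right_inv a := by
    by_cases h : S a
    · have h2 : S (u⁻¹ a) := by
        rw [hu (u⁻¹ a), perm_apply_inv_self]; exact h
      simp [h, h2, -Equiv.Perm.coe_inv, perm_apply_inv_self]
    · have h2 : ¬ S (w⁻¹ a) := by
        rw [hw (w⁻¹ a), perm_apply_inv_self]; exact h
      simp [h, h2, -Equiv.Perm.coe_inv, perm_apply_inv_self]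

private lemma pw_apply (u w : Perm (Fin r)) (S : Fin r → Prop) [DecidablePred S]
    (hu : ∀ a, S a ↔ S (u a)) (hw : ∀ a, S a ↔ S (w a)) (a : Fin r) :
    pw u w S hu hw a = if S a then u a else w a := rfl

private lemma pw_inv_apply (u w : Perm (Fin r)) (S : Fin r → Prop) [DecidablePred S]
    (hu : ∀ a, S a ↔ S (u a)) (hw : ∀ a, S a ↔ S (w a)) (a : Fin r) :
    (pw u w S hu hw)⁻¹ a = if S a then u⁻¹ a else w⁻¹ a := rfl

private def flp (u₀ : Perm (Fin r)) (f : Fin r → ZMod 2) : Perm (Fin r) :=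
  if h : ∀ a, f (u₀ a) = f a then
    pw u₀⁻¹ u₀ (fun a => f a = 1)
      (fun a => by
        show f a = 1 ↔ f (u₀⁻¹ a) = 1
        have h2 := h (u₀⁻¹ a)
        rw [perm_apply_inv_self] at h2
        rw [h2])
      (fun a => by
        show f a = 1 ↔ f (u₀ a) = 1
        rw [h a])
  else 1

-- the "half flp" permutation used for reindexing and sign computations
private def hp (u₀ : Perm (Fin r)) (f : Fin r → ZMod 2) (h : ∀ a, f (u₀ a) = f a) :
    Perm (Fin r) :=
  pw u₀ 1 (fun a => f a = 1)
    (fun a => by show f a = 1 ↔ f (u₀ a) = 1; rw [h a]) (fun a => iff_of_eq (congrArg (fun x => f x = 1) (Equiv.Perm.one_apply a).symm))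

private def hq (u₀ : Perm (Fin r)) (f : Fin r → ZMod 2) (h : ∀ a, f (u₀ a) = f a) :
    Perm (Fin r) :=
  pw 1 u₀ (fun a => f a = 1) (fun a => iff_of_eq (congrArg (fun x => f x = 1) (Equiv.Perm.one_apply a).symm))
    (fun a => by show f a = 1 ↔ f (u₀ a) = 1; rw [h a])

private lemma hpq (u₀ : Perm (Fin r)) (f : Fin r → ZMod 2) (h : ∀ a, f (u₀ a) = f a) :
    u₀ = hp u₀ f h * hq u₀ f h := by
  refine Equiv.ext fun a => ?_
  simp only [Equiv.Perm.mul_apply, hq, hp, pw_apply]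
  by_cases hs : f a = 1
  · simp [hs, Equiv.Perm.one_apply]
  · have hs2 : ¬ f (u₀ a) = 1 := by rw [h a]; exact hs
    simp [hs, hs2, Equiv.Perm.one_apply]

private lemma flp_eq_mul (u₀ : Perm (Fin r)) (f : Fin r → ZMod 2)
    (h : ∀ a, f (u₀ a) = f a) :
    flp u₀ f = (hp u₀ f h)⁻¹ * hq u₀ f h := by
  refine Equiv.ext fun a => ?_
  rw [flp, dif_pos h]
  simp only [Equiv.Perm.mul_apply, hq, hp, pw_apply, pw_inv_apply]
  by_cases hs : f a = 1
  · simp [hs, Equiv.Perm.one_apply]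
  · have hs2 : ¬ f (u₀ a) = 1 := by rw [h a]; exact hs
    simp [hs, hs2, Equiv.Perm.one_apply]

private lemma sign_flip (u₀ : Perm (Fin r)) (f : Fin r → ZMod 2)
    (h : ∀ a, f (u₀ a) = f a) :
    Equiv.Perm.sign (flp u₀ f) = Equiv.Perm.sign u₀ := by
  rw [flp_eq_mul u₀ f h, map_mul, Equiv.Perm.sign_inv]
  conv_rhs => rw [hpq u₀ f h, map_mul]

private lemma MM_flip (u₀ : Perm (Fin r)) (f : Fin r → ZMod 2)
    (h : ∀ a, f (u₀ a) = f a) : MM (flp u₀ f) = MM u₀ := by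
  rw [MM, MM]
  rw [← Equiv.sum_comp (hp u₀ f h) (fun j => Finsupp.single (ee j (flp u₀ f j)) 1)]
  refine Finset.sum_congr rfl fun j _ => ?_
  congr 1
  rw [hp, pw_apply, flp, dif_pos h]
  by_cases hs : f j = 1
  · rw [if_pos hs]
    have hs2 : f (u₀ j) = 1 := by rw [h j]; exact hs
    rw [pw_apply, if_pos hs2, perm_inv_apply_self, ee_comm]
  · rw [if_neg hs, pw_apply]
    simp only [Equiv.Perm.one_apply]
    exact congrArg (ee j) (if_neg hs)

private lemma zmod2_cases (x : ZMod 2) : x = 0 ∨ x = 1 := by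
  revert x; decide

private lemma flp_surj (u₀ v : Perm (Fin r)) (h : MM v = MM u₀) :
    ∃ f : Fin r → ZMod 2, (∀ a, f (u₀ a) = f a) ∧ flp u₀ f = v := by
  classical
  refine ⟨fun a => if v a = u₀ a then 0 else 1, fun a => ?_, ?_⟩
  · show (if v (u₀ a) = u₀ (u₀ a) then (0:ZMod 2) else 1) = if v a = u₀ a then 0 else 1
    by_cases he : v a = u₀ a
    · have h2 : v (u₀ a) = u₀ (u₀ a) := by
        by_contra hcon
        have := bwd_lemma u₀ v h (u₀ a) hcon
        rw [perm_inv_apply_self] at this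
        exact this he
      rw [if_pos he, if_pos h2]
    · have h2 : v (u₀ a) ≠ u₀ (u₀ a) := fwd_lemma u₀ v h a he
      rw [if_neg he, if_neg h2]
  · refine Equiv.ext fun a => ?_
    rw [flp, dif_pos, pw_apply]
    · show (if (if v a = u₀ a then (0:ZMod 2) else 1) = 1 then u₀⁻¹ a else u₀ a) = v a
      by_cases he : v a = u₀ a
      · rw [if_neg (show ¬ ((if v a = u₀ a then (0 : ZMod 2) else 1) = 1) by
          rw [if_pos he]; decide), he]
      · rw [if_pos (show (if v a = u₀ a then (0 : ZMod 2) else 1) = 1 by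
          rw [if_neg he])]
        exact ((alt_lemma u₀ v h a).resolve_left he).symm
    · intro b
      show (if v (u₀ b) = u₀ (u₀ b) then (0:ZMod 2) else 1) = if v b = u₀ b then 0 else 1
      by_cases he : v b = u₀ b
      · have h2 : v (u₀ b) = u₀ (u₀ b) := by
          by_contra hcon
          have := bwd_lemma u₀ v h (u₀ b) hcon
          rw [perm_inv_apply_self] at this
          exact this he
        rw [if_pos he, if_pos h2]
      · have h2 : v (u₀ b) ≠ u₀ (u₀ b) := fwd_lemma u₀ v h b he
        rw [if_neg he, if_neg h2]

private lemma flp_eq_iff (u₀ : Perm (Fin r)) (f g : Fin r → ZMod 2)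
    (hf : ∀ a, f (u₀ a) = f a) (hg : ∀ a, g (u₀ a) = g a) :
    flp u₀ f = flp u₀ g ↔ ∀ a, f a = g a ∨ u₀ a = u₀⁻¹ a := by
  rw [flp, flp, dif_pos hf, dif_pos hg, Equiv.ext_iff]
  constructor
  · intro H a
    have Ha := H a
    rw [pw_apply, pw_apply] at Ha
    rcases zmod2_cases (f a) with hfa | hfa <;> rcases zmod2_cases (g a) with hga | hga
    · exact Or.inl (hfa.trans hga.symm)
    · rw [if_neg (by rw [hfa]; decide), if_pos hga] at Ha
      exact Or.inr Ha
    · rw [if_pos hfa, if_neg (by rw [hga]; decide)] at Ha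
      exact Or.inr Ha.symm
    · exact Or.inl (hfa.trans hga.symm)
  · intro H a
    rw [pw_apply, pw_apply]
    rcases H a with he | he
    · rw [he]
    · by_cases hfa : f a = 1 <;> by_cases hga : g a = 1 <;>
        simp [hfa, hga, he]

private abbrev Pp (u₀ : Perm (Fin r)) (f : Fin r → ZMod 2) : Prop :=
  ∀ a, f (u₀ a) = f a

private abbrev Qq (u₀ : Perm (Fin r)) (f : Fin r → ZMod 2) : Prop :=
  (∀ a, f (u₀ a) = f a) ∧ ∀ a, f a = 1 → u₀ a = u₀⁻¹ a

private lemma main_count (u₀ : Perm (Fin r)) :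
    ∃ k : ℕ,
      (∑ σ : Perm (Fin r), if MM σ = MM u₀ then ((Equiv.Perm.sign σ : ℤ)) else 0)
        = (Equiv.Perm.sign u₀ : ℤ) * 2 ^ k := by
  classical
  set F : Finset (Perm (Fin r)) := univ.filter (fun σ => MM σ = MM u₀) with hF
  -- subgroups
  have zmem : Pp u₀ (0 : Fin r → ZMod 2) := fun a => rfl
  have addmem : ∀ {f g : Fin r → ZMod 2}, Pp u₀ f → Pp u₀ g → Pp u₀ (f + g) :=
    fun hf hg a => by simp only [Pi.add_apply, hf a, hg a]
  have negmem : ∀ {f : Fin r → ZMod 2}, Pp u₀ f → Pp u₀ (-f) := fun hf a => by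
    simp only [Pi.neg_apply, hf a]
  let Gsub : AddSubgroup (Fin r → ZMod 2) :=
    { carrier := {f | Pp u₀ f}
      add_mem' := addmem
      zero_mem' := zmem
      neg_mem' := negmem }
  let Ssub : AddSubgroup (Fin r → ZMod 2) :=
    { carrier := {f | Qq u₀ f}
      add_mem' := by
        rintro f g ⟨hf1, hf2⟩ ⟨hg1, hg2⟩
        refine ⟨addmem hf1 hg1, fun a ha => ?_⟩
        have ha' : f a + g a = 1 := ha
        rcases zmod2_cases (f a) with h | h
        · rcases zmod2_cases (g a) with h' | h'
          · rw [h, h'] at ha'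
            exact absurd ha' (by decide)
          · exact hg2 a h'
        · exact hf2 a h
      zero_mem' := ⟨zmem, fun a ha => absurd (show (0 : ZMod 2) = 1 from ha) (by decide)⟩
      neg_mem' := by
        rintro f ⟨hf1, hf2⟩
        refine ⟨negmem hf1, fun a ha => ?_⟩
        apply hf2 a
        have ha' : -(f a) = 1 := ha
        rcases zmod2_cases (f a) with h | h
        · rw [h] at ha'
          exact absurd ha' (by decide)
        · exact h }
  have hle : Ssub ≤ Gsub := fun f hf => hf.1
  have hGcard : Nat.card Gsub = (univ.filter (Pp u₀)).card := by
    have e : Nat.card Gsub = Nat.card {f : Fin r → ZMod 2 // Pp u₀ f} :=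
      Nat.card_congr (Equiv.subtypeEquivRight fun f => Iff.rfl)
    rw [e, Nat.card_eq_fintype_card, Fintype.card_subtype]
  have hScard : Nat.card Ssub = (univ.filter (Qq u₀)).card := by
    have e : Nat.card Ssub = Nat.card {f : Fin r → ZMod 2 // Qq u₀ f} :=
      Nat.card_congr (Equiv.subtypeEquivRight fun f => Iff.rfl)
    rw [e, Nat.card_eq_fintype_card, Fintype.card_subtype]
  have hVcard : Nat.card (Fin r → ZMod 2) = 2 ^ r := by
    rw [Nat.card_eq_fintype_card]
    simp
  have hGdvd : (univ.filter (Pp u₀)).card ∣ 2 ^ r := by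
    rw [← hGcard, ← hVcard]
    exact AddSubgroup.card_addSubgroup_dvd_card Gsub
  have hSdvd : (univ.filter (Qq u₀)).card ∣ (univ.filter (Pp u₀)).card := by
    rw [← hGcard, ← hScard]
    exact AddSubgroup.card_dvd_of_le hle
  obtain ⟨n, -, hn⟩ := (Nat.dvd_prime_pow Nat.prime_two).1 hGdvd
  obtain ⟨s, -, hs⟩ := (Nat.dvd_prime_pow Nat.prime_two).1 (hSdvd.trans hGdvd)
  -- fiber counting
  have hfibers : (univ.filter (Pp u₀)).card = F.card * (univ.filter (Qq u₀)).card := by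
    rw [Finset.card_eq_sum_card_fiberwise
      (f := fun f => flp u₀ f) (t := F)
      (fun f hf => by
        simp only [hF, Finset.mem_coe, Finset.mem_filter, Finset.mem_univ, true_and] at hf ⊢
        exact MM_flip u₀ f hf)]
    rw [Finset.sum_congr rfl (fun v hv => ?_), Finset.sum_const, smul_eq_mul]
    simp only [hF, Finset.mem_filter, Finset.mem_univ, true_and] at hv
    obtain ⟨f₀, hf₀, hflip⟩ := flp_surj u₀ v hv
    refine Finset.card_nbij' (fun g => g - f₀) (fun t => t + f₀) ?_ ?_ ?_ ?_
    · intro g hg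
      simp only [Finset.mem_coe, Finset.mem_filter, Finset.mem_univ, true_and] at hg ⊢
      obtain ⟨hg1, hg2⟩ := hg
      refine ⟨fun a => by simp only [Pi.sub_apply, hg1 a, hf₀ a], fun a ha => ?_⟩
      rw [← hflip] at hg2
      rcases (flp_eq_iff u₀ g f₀ hg1 hf₀).1 hg2 a with he | he
      · have ha' : g a - f₀ a = 1 := ha
        rw [he, sub_self] at ha'
        exact absurd ha' (by decide)
      · exact he
    · intro t ht
      simp only [Finset.mem_coe, Finset.mem_filter, Finset.mem_univ, true_and] at ht ⊢
      obtain ⟨ht1, ht2⟩ := ht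
      have hmem : Pp u₀ (t + f₀) := addmem ht1 hf₀
      refine ⟨hmem, ?_⟩
      rw [← hflip, flp_eq_iff u₀ (t + f₀) f₀ hmem hf₀]
      intro a
      rcases zmod2_cases (t a) with h | h
      · left
        show t a + f₀ a = f₀ a
        rw [h, zero_add]
      · exact Or.inr (ht2 a h)
    · intro g _
      exact sub_add_cancel g f₀
    · intro t _
      exact add_sub_cancel_right t f₀
  -- F is nonempty
  have hFne : 0 < F.card := Finset.card_pos.2 ⟨u₀, by simp [hF]⟩
  -- conclude F.card = 2 ^ (n - s)
  have hmul : F.card * 2 ^ s = 2 ^ n := by rw [← hs, ← hn, hfibers]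
  have hsle : s ≤ n := by
    have h2 : (2:ℕ) ^ s ≤ 2 ^ n := by
      calc (2:ℕ) ^ s ≤ F.card * 2 ^ s := Nat.le_mul_of_pos_left _ hFne
      _ = 2 ^ n := hmul
    exact (Nat.pow_le_pow_iff_right (by norm_num)).1 h2
  have hFcard : F.card = 2 ^ (n - s) := by
    have h2 : 2 ^ (n - s) * 2 ^ s = 2 ^ n := by
      rw [← pow_add, Nat.sub_add_cancel hsle]
    exact Nat.eq_of_mul_eq_mul_right (Nat.pow_pos (by norm_num))
      (hmul.trans h2.symm)
  -- sign constancy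
  refine ⟨n - s, ?_⟩
  rw [← Finset.sum_filter]
  have hsign : ∀ σ ∈ F, (Equiv.Perm.sign σ : ℤ) = (Equiv.Perm.sign u₀ : ℤ) := by
    intro σ hσ
    simp only [hF, Finset.mem_filter, Finset.mem_univ, true_and] at hσ
    obtain ⟨f, hf, hfl⟩ := flp_surj u₀ σ hσ
    rw [← hfl, sign_flip u₀ f hf]
  rw [Finset.sum_congr rfl hsign, Finset.sum_const, hFcard]
  push_cast
  ring

private lemma prodX (t : Finset (Fin r)) (s : Fin r → Fin r × Fin r) :
    (∏ i ∈ t, (X (s i) : MvPolynomial (Fin r × Fin r) ℤ)) =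
      monomial (∑ i ∈ t, Finsupp.single (s i) 1) 1 := by
  classical
  induction t using Finset.induction with
  | empty => simp
  | insert _ _ h ih =>
    rw [Finset.prod_insert h, Finset.sum_insert h, ih, X, monomial_mul, one_mul]

end Aux

/-- Every nonzero coefficient of the determinant of the generic symmetric matrix
`N` (with `N i j = x_{min(i,j), max(i,j)}`) over `ℤ` is `±2^k`; in particular,
for every permutation `u` the monomial `∏ j, N j (u j)` appears in `det N` with
nonzero coefficient. -/
theorem stmt8 (r : ℕ) (hr : 1 ≤ r)
    (N : Matrix (Fin r) (Fin r) (MvPolynomial (Fin r × Fin r) ℤ))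
    (hN : ∀ i j, N i j = X (min i j, max i j)) :
    (∀ m : (Fin r × Fin r) →₀ ℕ, coeff m N.det ≠ 0 →
        ∃ k : ℕ, coeff m N.det = 2 ^ k ∨ coeff m N.det = -(2 ^ k)) ∧
    (∀ u : Equiv.Perm (Fin r),
        coeff (∑ j : Fin r, Finsupp.single (min j (u j), max j (u j)) 1) N.det ≠ 0) := by
  classical
  have hdet : N.det = ∑ σ : Equiv.Perm (Fin r),
      (C ((Equiv.Perm.sign σ : ℤ)) : MvPolynomial (Fin r × Fin r) ℤ) *
        monomial (MM σ) 1 := by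
    rw [Matrix.det_apply']
    refine Finset.sum_congr rfl fun σ _ => ?_
    have h1 : ∏ i, N (σ i) i = (monomial (MM σ) 1 : MvPolynomial (Fin r × Fin r) ℤ) := by
      have h2 : ∀ i, N (σ i) i = X (ee i (σ i)) := by
        intro i
        rw [hN, ee, min_comm, max_comm]
      rw [Finset.prod_congr rfl fun i _ => h2 i, prodX, MM]
    rw [h1, eq_intCast (C : ℤ →+* MvPolynomial (Fin r × Fin r) ℤ)]
  have hco : ∀ m : (Fin r × Fin r) →₀ ℕ, coeff m N.det =
      ∑ σ : Equiv.Perm (Fin r),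
        (if MM σ = m then ((Equiv.Perm.sign σ : ℤ)) else 0) := by
    intro m
    rw [hdet, coeff_sum]
    refine Finset.sum_congr rfl fun σ _ => ?_
    rw [coeff_C_mul, coeff_monomial]
    split_ifs <;> simp
  constructor
  · intro m hm
    have hex : ∃ u₀ : Equiv.Perm (Fin r), MM u₀ = m := by
      by_contra hno
      push_neg at hno
      apply hm
      rw [hco m]
      exact Finset.sum_eq_zero fun σ _ => if_neg (hno σ)
    obtain ⟨u₀, rfl⟩ := hex
    obtain ⟨k, hk⟩ := main_count u₀
    refine ⟨k, ?_⟩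
    rw [hco (MM u₀), hk]
    rcases Int.units_eq_one_or (Equiv.Perm.sign u₀) with h | h <;> rw [h]
    · left; simp
    · right; simp
  · intro u
    have hMM : (∑ j : Fin r, Finsupp.single
        ((min j (u j), max j (u j)) : Fin r × Fin r) (1:ℕ)) = MM u := rfl
    rw [hMM, hco (MM u)]
    obtain ⟨k, hk⟩ := main_count u
    rw [hk]
    rcases Int.units_eq_one_or (Equiv.Perm.sign u) with h | h <;> rw [h] <;> simp
end

section
/- Let r ≥ 1, let {x_{ij} : 1 ≤ i ≤ j ≤ r} be independent commuting indeterminates, and let N be the r×r matrix with N_{ij} = x_{min(i,j), max(i,j)}. If u, u' ∈ S_r satisfy ∏_{j=1}^r N_{j, u(j)} = ∏_{j=1}^r N_{j, u'(j)} as monomials, then sgn(u) = sgn(u'). -/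
open Equiv Equiv.Perm Finset

/-- min/max pair determines the unordered pair. -/
lemma minmax_aux {α : Type*} [LinearOrder α] {a b c d : α}
    (h1 : min a b = min c d) (h2 : max a b = max c d) :
    (a = c ∧ b = d) ∨ (a = d ∧ b = c) := by
  rcases le_total a b with h | h <;> rcases le_total c d with h' | h'
  · rw [min_eq_left h, min_eq_left h'] at h1
    rw [max_eq_right h, max_eq_right h'] at h2
    exact Or.inl ⟨h1, h2⟩
  · rw [min_eq_left h, min_eq_right h'] at h1
    rw [max_eq_right h, max_eq_left h'] at h2
    exact Or.inr ⟨h1, h2⟩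
  · rw [min_eq_right h, min_eq_left h'] at h1
    rw [max_eq_left h, max_eq_right h'] at h2
    exact Or.inr ⟨h2, h1⟩
  · rw [min_eq_right h, min_eq_right h'] at h1
    rw [max_eq_left h, max_eq_left h'] at h2
    exact Or.inl ⟨h2, h1⟩

lemma prod_X_eq_monomial {σ R : Type*} [CommSemiring R] {ι : Type*} (s : Finset ι) (f : ι → σ) :
    (∏ j ∈ s, (MvPolynomial.X (f j) : MvPolynomial σ R)) =
      MvPolynomial.monomial (∑ j ∈ s, Finsupp.single (f j) 1) 1 := by
  classical
  induction s using Finset.induction_on with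
  | empty => simp
  | insert _ _ ha ih =>
      rw [Finset.prod_insert ha, Finset.sum_insert ha, ih, MvPolynomial.X,
        MvPolynomial.monomial_mul, one_mul]

/-- Generic lemma: if two maps induce the same partition on `S`, their images
have the same cardinality. -/
lemma card_image_eq_of_iff {α β γ : Type*} [DecidableEq β] [DecidableEq γ] (S : Finset α)
    (f : α → β) (g : α → γ) (h : ∀ a ∈ S, ∀ b ∈ S, f a = f b ↔ g a = g b) :
    (S.image f).card = (S.image g).card := by
  classical
  induction S using Finset.induction_on with
  | empty => simp
  | @insert a s ha ih =>
      have h' : ∀ x ∈ s, ∀ y ∈ s, f x = f y ↔ g x = g y := fun x hx y hy =>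
        h x (mem_insert_of_mem hx) y (mem_insert_of_mem hy)
      have hmem : f a ∈ s.image f ↔ g a ∈ s.image g := by
        simp only [Finset.mem_image]
        constructor
        · rintro ⟨b, hb, hfb⟩
          exact ⟨b, hb, (h b (mem_insert_of_mem hb) a (mem_insert_self _ _)).1 hfb⟩
        · rintro ⟨b, hb, hgb⟩
          exact ⟨b, hb, (h b (mem_insert_of_mem hb) a (mem_insert_self _ _)).2 hgb⟩
      rw [Finset.image_insert, Finset.image_insert]
      by_cases hfa : f a ∈ s.image f
      · rw [Finset.insert_eq_self.2 hfa, Finset.insert_eq_self.2 (hmem.1 hfa), ih h']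
      · rw [Finset.card_insert_of_notMem hfa,
          Finset.card_insert_of_notMem (fun hb => hfa (hmem.2 hb)), ih h']

/-- Cycle factors are exactly the cycles of support points. -/
lemma cycleFactorsFinset_eq_image {α : Type*} [DecidableEq α] [Fintype α] (v : Perm α) :
    v.cycleFactorsFinset = v.support.image v.cycleOf := by
  ext c
  constructor
  · intro hc
    obtain ⟨hc1, hc2⟩ := Equiv.Perm.mem_cycleFactorsFinset_iff.1 hc
    obtain ⟨x, hx⟩ := hc1
    have hxc : x ∈ c.support := Equiv.Perm.mem_support.2 hx.1
    have hxv : x ∈ v.support := Equiv.Perm.mem_support.2 (by rw [← hc2 x hxc]; exact hx.1)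
    exact Finset.mem_image.2 ⟨x, hxv, (Equiv.Perm.cycle_is_cycleOf hxc hc).symm⟩
  · intro hc
    obtain ⟨x, hx, rfl⟩ := Finset.mem_image.1 hc
    exact Equiv.Perm.cycleOf_mem_cycleFactorsFinset_iff.2 hx

/-- If every "edge" relation of `v` is an edge relation of `v'`, then same-cycle
for `v` implies same-cycle for `v'`. -/
lemma sameCycle_of_rel {α : Type*} [Fintype α] (v v' : Perm α)
    (hR : ∀ a b, (v a = b ∨ v b = a) → (v' a = b ∨ v' b = a)) :
    ∀ a b, v.SameCycle a b → v'.SameCycle a b := by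
  have key : ∀ (n : ℕ) (a : α), v'.SameCycle a ((v ^ n) a) := by
    intro n
    induction n with
    | zero => intro a; simp [Equiv.Perm.SameCycle.refl]
    | succ n ih =>
        intro a
        have hstep : v ((v ^ n) a) = (v ^ (n + 1)) a := by
          rw [pow_succ' v n]; rfl
        have h1 : v'.SameCycle ((v ^ n) a) ((v ^ (n + 1)) a) := by
          rcases hR ((v ^ n) a) ((v ^ (n + 1)) a) (Or.inl hstep) with h | h
          · exact ⟨1, by simpa using h⟩
          · exact Equiv.Perm.SameCycle.symm ⟨1, by simpa using h⟩
        exact (ih a).trans h1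
  intro a b hab
  obtain ⟨i, _, _, hi⟩ := hab.exists_pow_eq''
  rw [← hi]
  exact key i a

/-- For the generic symmetric matrix `N i j = x_{min(i,j), max(i,j)}` over `ℤ`,
if two permutations `u, u'` yield the same monomial `∏ j, N j (u j)`, then they
have the same sign. -/
theorem stmt9 (r : ℕ) (hr : 1 ≤ r)
    (N : Matrix (Fin r) (Fin r) (MvPolynomial (Fin r × Fin r) ℤ))
    (hN : ∀ i j, N i j = MvPolynomial.X (min i j, max i j))
    (u u' : Equiv.Perm (Fin r))
    (h : ∏ j : Fin r, N j (u j) = ∏ j : Fin r, N j (u' j)) :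
    Equiv.Perm.sign u = Equiv.Perm.sign u' := by
  classical
  set f : Fin r → Fin r × Fin r := fun j => (min j (u j), max j (u j)) with hf
  set g : Fin r → Fin r × Fin r := fun j => (min j (u' j), max j (u' j)) with hg
  -- Step 1: extract equality of exponent finsupps
  have hmono : (MvPolynomial.monomial (∑ j : Fin r, Finsupp.single (f j) 1) (1 : ℤ)) =
      MvPolynomial.monomial (∑ j : Fin r, Finsupp.single (g j) 1) 1 := by
    rw [← prod_X_eq_monomial, ← prod_X_eq_monomial]
    simpa only [hN] using h
  have hexp : (∑ j : Fin r, Finsupp.single (f j) 1) = ∑ j : Fin r, Finsupp.single (g j) 1 :=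
    MvPolynomial.monomial_left_injective one_ne_zero hmono
  -- Step 2: equality of edge sets
  have hedge : ∀ p : Fin r × Fin r, (∃ j, f j = p) ↔ (∃ j, g j = p) := by
    intro p
    have h1 := DFunLike.congr_fun hexp p
    simp only [Finsupp.coe_finset_sum, Finset.sum_apply, Finsupp.single_apply] at h1
    have aux : ∀ (F : Fin r → Fin r × Fin r),
        (∃ j, F j = p) ↔ (∑ j : Fin r, if F j = p then 1 else 0) ≠ 0 := by
      intro F
      rw [Ne, Finset.sum_eq_zero_iff]
      push_neg
      constructor
      · rintro ⟨j, hj⟩; exact ⟨j, Finset.mem_univ j, by simp [hj]⟩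
      · rintro ⟨j, _, hj⟩
        refine ⟨j, ?_⟩
        by_contra hne
        simp [hne] at hj
    rw [aux f, aux g, h1]
  -- Step 3: equality of "edge relations"
  have hRel : ∀ (a b : Fin r), (u a = b ∨ u b = a) ↔ (u' a = b ∨ u' b = a) := by
    have edge_iff : ∀ (v : Perm (Fin r)) (a b : Fin r),
        (v a = b ∨ v b = a) ↔ ∃ j, (min j (v j), max j (v j)) = (min a b, max a b) := by
      intro v a b
      constructor
      · rintro (rfl | rfl)
        · exact ⟨a, rfl⟩
        · exact ⟨b, by rw [min_comm, max_comm]⟩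
      · rintro ⟨j, hj⟩
        obtain ⟨h1, h2⟩ := Prod.mk.injEq .. ▸ hj
        rcases minmax_aux h1 h2 with ⟨rfl, hjb⟩ | ⟨rfl, hja⟩
        · exact Or.inl hjb
        · exact Or.inr hja
    intro a b
    rw [edge_iff u a b, edge_iff u' a b]
    exact hedge (min a b, max a b)
  -- Step 4: same-cycle relations coincide
  have hSC : ∀ a b, u.SameCycle a b ↔ u'.SameCycle a b := fun a b =>
    ⟨sameCycle_of_rel u u' (fun a b => (hRel a b).1) a b,
     sameCycle_of_rel u' u (fun a b => (hRel a b).2) a b⟩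
  -- Step 5: supports coincide
  have hsupp : u.support = u'.support := by
    have aux : ∀ (v v' : Perm (Fin r)), (∀ a b, v.SameCycle a b → v'.SameCycle a b) →
        ∀ x, v' x = x → v x = x := by
      intro v v' hvv' x hx
      obtain ⟨n, hn⟩ := hvv' x (v x) ⟨1, by simp⟩
      rw [Equiv.Perm.zpow_apply_eq_self_of_apply_eq_self hx] at hn
      exact hn.symm
    ext x
    simp only [Equiv.Perm.mem_support]
    exact not_congr ⟨fun hx => aux u' u (fun a b => (hSC a b).2) x hx,
      fun hx => aux u u' (fun a b => (hSC a b).1) x hx⟩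
  -- Step 6: number of cycles coincide
  have hcyc : u.cycleFactorsFinset.card = u'.cycleFactorsFinset.card := by
    rw [cycleFactorsFinset_eq_image, cycleFactorsFinset_eq_image, ← hsupp]
    apply card_image_eq_of_iff
    intro a ha b hb
    have key : ∀ (v : Perm (Fin r)), b ∈ v.support →
        (v.cycleOf a = v.cycleOf b ↔ v.SameCycle a b) := by
      intro v hbv
      constructor
      · intro hab
        have hb' : b ∈ (v.cycleOf b).support :=
          Equiv.Perm.mem_support_cycleOf_iff.2 ⟨Equiv.Perm.SameCycle.refl v b, hbv⟩
        rw [← hab] at hb'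
        exact (Equiv.Perm.mem_support_cycleOf_iff.1 hb').1
      · exact fun hab => hab.cycleOf_eq
    rw [key u (hsupp ▸ hb), key u' (hsupp ▸ hb)]
    exact hSC a b
  -- Step 7: conclude via the sign formula
  have hcard : ∀ (v : Perm (Fin r)), Multiset.card v.cycleType = v.cycleFactorsFinset.card := by
    intro v
    rw [Equiv.Perm.cycleType_def, Multiset.card_map]
    rfl
  rw [Equiv.Perm.sign_of_cycleType, Equiv.Perm.sign_of_cycleType,
    Equiv.Perm.sum_cycleType, Equiv.Perm.sum_cycleType, hcard, hcard, hsupp, hcyc]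
end

section
/- Let r ≥ 1, let {x_{ij} : 1 ≤ i ≤ j ≤ r} be independent commuting indeterminates, and let N be the r×r matrix with N_{ij} = x_{min(i,j), max(i,j)}. For a fixed u ∈ S_r, the number of permutations u' ∈ S_r with ∏_{j=1}^r N_{j, u'(j)} = ∏_{j=1}^r N_{j, u(j)} equals 2^k, where k is the number of cycles of u of length at least 3. -/
open Equiv Equiv.Perm Finset MvPolynomial

namespace Stmt10Aux

variable {α : Type*} [Fintype α] [LinearOrder α] [DecidableEq α]

/-- The unordered edge `{j, u j}` as an ordered pair. -/
def edgeOf (u : Perm α) (j : α) : α × α := (min j (u j), max j (u j))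

/-- exponent finsupp of the monomial `∏ j, X (edgeOf u j)` -/
noncomputable def expOf (u : Perm α) : (α × α) →₀ ℕ :=
  ∑ j, Finsupp.single (edgeOf u j) 1

lemma prod_X_eq (u : Perm α) :
    ∏ j, (X (edgeOf u j) : MvPolynomial (α × α) ℤ) = monomial (expOf u) 1 := by
  classical
  rw [expOf]
  induction (univ : Finset α) using Finset.cons_induction with
  | empty => simp
  | cons a s ha ih =>
      rw [Finset.prod_cons, Finset.sum_cons, ih, X, monomial_mul, one_mul]

lemma pair_eq {β : Type*} {x y z w : β} (h : ({x, y} : Multiset β) = {z, w}) :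
    (x = z ∧ y = w) ∨ (x = w ∧ y = z) := by
  classical
  rw [Multiset.insert_eq_cons, Multiset.insert_eq_cons, Multiset.cons_eq_cons] at h
  rcases h with ⟨h1, h2⟩ | ⟨hne, t, h1, h2⟩
  · exact Or.inl ⟨h1, Multiset.singleton_inj.mp h2⟩
  · rw [Multiset.singleton_eq_cons_iff] at h1 h2
    exact Or.inr ⟨h2.1.symm, h1.1⟩

/-- the multiset of neighbors of `a` contributed by an edge `p` -/
def nbrF (a : α) (p : α × α) : Multiset α :=
  (if p.1 = a then {p.2} else 0) + (if p.2 = a then {p.1} else 0)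

noncomputable def nbrHom (a : α) : ((α × α) →₀ ℕ) →+ Multiset α :=
  Finsupp.liftAddHom (fun p => multiplesHom _ (nbrF a p))

lemma nbrF_edge (u : Perm α) (a j : α) :
    nbrF a (edgeOf u j) =
      (if j = a then {u j} else 0) + (if u j = a then {j} else 0) := by
  rcases le_total j (u j) with h | h
  · rw [nbrF, edgeOf, min_eq_left h, max_eq_right h]
  · rw [nbrF, edgeOf, min_eq_right h, max_eq_left h, add_comm]

lemma nbrHom_expOf (u : Perm α) (a : α) :
    nbrHom a (expOf u) = {u a, u⁻¹ a} := by
  classical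
  rw [expOf, map_sum]
  have h1 : ∀ j : α, nbrHom a (Finsupp.single (edgeOf u j) 1) = nbrF a (edgeOf u j) := by
    intro j
    rw [nbrHom, Finsupp.liftAddHom_apply_single, multiplesHom_apply, one_smul]
  simp_rw [h1, nbrF_edge]
  rw [Finset.sum_add_distrib, Finset.sum_ite_eq' univ a (fun j => ({u j} : Multiset α)),
    if_pos (mem_univ a)]
  have h2 : ∀ j : α, (if u j = a then ({j} : Multiset α) else 0)
      = (if j = u⁻¹ a then ({j} : Multiset α) else 0) := by
    intro j
    rcases eq_or_ne (u j) a with h | h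
    · rw [if_pos h, if_pos (by rw [← h]; simp)]
    · rw [if_neg h, if_neg fun hj => h (by rw [hj]; simp)]
  simp_rw [h2]
  rw [Finset.sum_ite_eq' univ (u⁻¹ a) (fun j => ({j} : Multiset α)), if_pos (mem_univ _)]
  rfl

/-- The neighbor condition. -/
def Nbr (u u' : Perm α) : Prop := ∀ a, ({u' a, u'⁻¹ a} : Multiset α) = {u a, u⁻¹ a}

lemma nbr_of_exp_eq {u u' : Perm α} (h : expOf u' = expOf u) : Nbr u u' := fun a => by
  rw [← nbrHom_expOf u' a, ← nbrHom_expOf u a, h]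

lemma Nbr.inv {u u' : Perm α} (h : Nbr u u') : Nbr u⁻¹ u' := fun a => by
  rw [h a, inv_inv, Multiset.pair_comm]

lemma Nbr.step {u u' : Perm α} (H : Nbr u u') {a : α} (ha : u' a = u a) :
    u' (u a) = u (u a) := by
  have hinv : u'⁻¹ (u a) = a := by rw [← ha]; simp
  have h := H (u a)
  rw [hinv, Perm.coe_inv, Equiv.symm_apply_apply] at h
  rcases pair_eq h with ⟨h3, _⟩ | ⟨h3, h4⟩
  · exact h3
  · exact h3.trans h4

lemma Nbr.pow {u u' : Perm α} (H : Nbr u u') {a : α} (ha : u' a = u a) :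
    ∀ n : ℕ, u' ((u ^ n) a) = u ((u ^ n) a) := by
  intro n
  induction n with
  | zero => simpa using ha
  | succ n ih =>
      rw [pow_succ', Perm.mul_apply]
      exact H.step ih

lemma Nbr.sameCycle {u u' : Perm α} (H : Nbr u u') {a b : α} (hb : u.SameCycle a b)
    (ha : u' a = u a) : u' b = u b := by
  obtain ⟨n, -, rfl⟩ := hb.exists_pow_eq'
  exact H.pow ha n

lemma Nbr.choice {u u' : Perm α} (H : Nbr u u') (a : α) :
    u' a = u a ∨ u' a = u⁻¹ a := by
  rcases pair_eq (H a) with ⟨h, -⟩ | ⟨h, -⟩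
  · exact Or.inl h
  · exact Or.inr h

lemma Nbr.dichotomy {u u' : Perm α} (H : Nbr u u') {c : Perm α}
    (hc : c ∈ u.cycleFactorsFinset) :
    (∀ a ∈ c.support, u' a = u a) ∨ (∀ a ∈ c.support, u' a = u⁻¹ a) := by
  classical
  obtain ⟨a, ha⟩ : c.support.Nonempty := by
    rw [← Finset.card_pos]
    have := (mem_cycleFactorsFinset_iff.mp hc).1.two_le_card_support
    omega
  have hco : c = u.cycleOf a := cycle_is_cycleOf ha hc
  have hsc : ∀ b ∈ c.support, u.SameCycle a b := by
    intro b hb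
    rw [hco] at hb
    exact (mem_support_cycleOf_iff.mp hb).1
  rcases H.choice a with h | h
  · exact Or.inl fun b hb => H.sameCycle (hsc b hb) h
  · refine Or.inr fun b hb => ?_
    exact H.inv.sameCycle ((hsc b hb).inv) h

lemma pow_mem_pair {u : Perm α} {a : α} (h2 : u (u a) = a) :
    ∀ n : ℕ, (u ^ n) a = a ∨ (u ^ n) a = u a := by
  intro n
  induction n with
  | zero => exact Or.inl rfl
  | succ n ih =>
      rw [pow_succ', Perm.mul_apply]
      rcases ih with h | h
      · rw [h]; exact Or.inr rfl
      · rw [h, h2]; exact Or.inl rfl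

/-- On a cycle of length ≥ 3, `u⁻¹ a ≠ u a`. -/
lemma big_ne {u c : Perm α} (hc : c ∈ u.cycleFactorsFinset) (hcard : 3 ≤ c.support.card)
    {a : α} (ha : a ∈ c.support) : u⁻¹ a ≠ u a := by
  classical
  intro h
  have h2 : u (u a) = a := by
    conv_lhs => rw [← h]
    simp
  have haux := pow_mem_pair h2
  have hsub : c.support ⊆ {a, u a} := by
    intro b hb
    have hco : c = u.cycleOf a := cycle_is_cycleOf ha hc
    rw [hco] at hb
    obtain ⟨n, -, rfl⟩ := (mem_support_cycleOf_iff.mp hb).1.exists_pow_eq'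
    rcases haux n with h | h <;> simp [h]
  have hle := Finset.card_le_card hsub
  have : ({a, u a} : Finset α).card ≤ 2 :=
    (Finset.card_insert_le _ _).trans (by simp)
  omega

/-- On a cycle of length ≤ 2, `u⁻¹ a = u a`. -/
lemma short_eq {u c : Perm α} (hc : c ∈ u.cycleFactorsFinset) (hcard : c.support.card ≤ 2)
    {a : α} (ha : a ∈ c.support) : u⁻¹ a = u a := by
  classical
  obtain ⟨hcy, hagree⟩ := mem_cycleFactorsFinset_iff.mp hc
  have hcard2 : c.support.card = 2 := le_antisymm hcard hcy.two_le_card_support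
  obtain ⟨x, y, hxy, rfl⟩ := card_support_eq_two.mp hcard2
  have hmem : Equiv.swap x y a ∈ (Equiv.swap x y).support := by
    rwa [apply_mem_support]
  have h2 : u (u a) = a := by
    rw [← hagree a ha, ← hagree _ hmem, Equiv.swap_apply_self]
  have h3 : u⁻¹ (u (u a)) = u⁻¹ a := congrArg _ h2
  simp only [Perm.coe_inv, Equiv.symm_apply_apply] at h3
  exact h3.symm


/-- flip `u` to `u⁻¹` on the cycles belonging to `T`. -/
def flipped (u : Perm α) (T : Finset (Perm α)) : Perm α where
  toFun a := if u.cycleOf a ∈ T then u⁻¹ a else u a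
  invFun a := if u.cycleOf a ∈ T then u a else u⁻¹ a
  left_inv a := by
    have h1 : u.cycleOf (u⁻¹ a) = u.cycleOf a := SameCycle.cycleOf_eq ⟨1, by simp⟩
    have h2 : u.cycleOf (u a) = u.cycleOf a := cycleOf_self_apply u a
    by_cases h : u.cycleOf a ∈ T
    · simp only [if_pos h, h1, if_pos h, (Perm.eq_inv_iff_eq (f := u) (x := u⁻¹ a) (y := a)).mp rfl]
    · simp only [if_neg h, h2, if_neg h, Perm.coe_inv, Equiv.symm_apply_apply]
  right_inv a := by
    have h1 : u.cycleOf (u⁻¹ a) = u.cycleOf a := SameCycle.cycleOf_eq ⟨1, by simp⟩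
    have h2 : u.cycleOf (u a) = u.cycleOf a := cycleOf_self_apply u a
    by_cases h : u.cycleOf a ∈ T
    · simp only [if_pos h, h2, if_pos h, Perm.coe_inv, Equiv.symm_apply_apply]
    · simp only [if_neg h, h1, if_neg h, (Perm.eq_inv_iff_eq (f := u) (x := u⁻¹ a) (y := a)).mp rfl]

/-- move each point one step backwards along the cycles belonging to `T`. -/
def shifter (u : Perm α) (T : Finset (Perm α)) : Perm α where
  toFun a := if u.cycleOf a ∈ T then u⁻¹ a else a
  invFun a := if u.cycleOf a ∈ T then u a else a
  left_inv a := by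
    have h1 : u.cycleOf (u⁻¹ a) = u.cycleOf a := SameCycle.cycleOf_eq ⟨1, by simp⟩
    by_cases h : u.cycleOf a ∈ T
    · simp only [if_pos h, h1, if_pos h, (Perm.eq_inv_iff_eq (f := u) (x := u⁻¹ a) (y := a)).mp rfl]
    · simp only [if_neg h, if_neg h]
  right_inv a := by
    have h2 : u.cycleOf (u a) = u.cycleOf a := cycleOf_self_apply u a
    by_cases h : u.cycleOf a ∈ T
    · simp only [if_pos h, h2, if_pos h, Perm.coe_inv, Equiv.symm_apply_apply]
    · simp only [if_neg h, if_neg h]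

lemma flipped_apply (u : Perm α) (T : Finset (Perm α)) (a : α) :
    flipped u T a = if u.cycleOf a ∈ T then u⁻¹ a else u a := rfl

lemma expOf_flipped (u : Perm α) (T : Finset (Perm α)) :
    expOf (flipped u T) = expOf u := by
  rw [expOf, expOf]
  refine Fintype.sum_equiv (shifter u T) _ _ ?_
  intro j
  by_cases h : u.cycleOf j ∈ T
  · have e1 : (flipped u T) j = u⁻¹ j := if_pos h
    have e2 : (shifter u T) j = u⁻¹ j := if_pos h
    simp only [edgeOf]
    rw [e1, e2, Perm.coe_inv, Equiv.apply_symm_apply, min_comm, max_comm]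
  · have e1 : (flipped u T) j = u j := if_neg h
    have e2 : (shifter u T) j = j := if_neg h
    simp only [edgeOf]
    rw [e1, e2]

end Stmt10Aux

set_option maxHeartbeats 1000000 in
open Stmt10Aux in
/-- For the generic symmetric matrix `N i j = x_{min(i,j), max(i,j)}` over `ℤ`
and a fixed permutation `u ∈ S_r`, the number of permutations `u'` with
`∏ j, N j (u' j) = ∏ j, N j (u j)` is `2^k`, where `k` is the number of cycles
of `u` of length at least `3`. -/
theorem stmt10 (r : ℕ) (hr : 1 ≤ r)
    (N : Matrix (Fin r) (Fin r) (MvPolynomial (Fin r × Fin r) ℤ))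
    (hN : ∀ i j, N i j = MvPolynomial.X (min i j, max i j))
    (u : Equiv.Perm (Fin r)) :
    (Finset.univ.filter (fun u' : Equiv.Perm (Fin r) =>
        ∏ j : Fin r, N j (u' j) = ∏ j : Fin r, N j (u j))).card =
      2 ^ (u.cycleFactorsFinset.filter (fun c => 3 ≤ c.support.card)).card := by
  classical
  have hcond : ∀ u' : Perm (Fin r),
      (∏ j, N j (u' j) = ∏ j, N j (u j)) ↔ expOf u' = expOf u := by
    intro u'
    have hN' : ∀ (v : Perm (Fin r)) (j : Fin r), N j (v j) = X (edgeOf v j) :=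
      fun v j => hN j (v j)
    simp_rw [hN']
    rw [prod_X_eq, prod_X_eq]
    constructor
    · intro h
      exact monomial_left_injective (R := ℤ) one_ne_zero h
    · intro h
      rw [h]
  set bige := u.cycleFactorsFinset.filter (fun c => 3 ≤ c.support.card) with hbige
  rw [← Finset.card_powerset]
  refine Finset.card_bij'
    (fun u' _ => bige.filter (fun c => ∀ a ∈ c.support, u' a = u⁻¹ a))
    (fun T _ => flipped u T) ?_ ?_ ?_ ?_
  · intro u' _
    exact Finset.mem_powerset.mpr (Finset.filter_subset _ _)
  · intro T _
    exact Finset.mem_filter.mpr ⟨Finset.mem_univ _, (hcond _).mpr (expOf_flipped u T)⟩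
  · -- left inverse : flipped u (T u') = u'
    intro u' hu'
    have hE : expOf u' = expOf u := (hcond u').mp (Finset.mem_filter.mp hu').2
    have H : Nbr u u' := nbr_of_exp_eq hE
    refine Equiv.ext fun a => ?_
    rw [flipped_apply]
    beta_reduce
    split_ifs with hmem
    · obtain ⟨hin, hall⟩ := Finset.mem_filter.mp hmem
      rw [hbige] at hin
      have hsupp : a ∈ u.support :=
        cycleOf_mem_cycleFactorsFinset_iff.mp (Finset.mem_filter.mp hin).1
      exact (hall a (mem_support_cycleOf_iff.mpr ⟨SameCycle.refl _ _, hsupp⟩)).symm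
    · by_cases hsupp : a ∈ u.support
      · have hc : u.cycleOf a ∈ u.cycleFactorsFinset :=
          cycleOf_mem_cycleFactorsFinset_iff.mpr hsupp
        have ha : a ∈ (u.cycleOf a).support :=
          mem_support_cycleOf_iff.mpr ⟨SameCycle.refl _ _, hsupp⟩
        by_cases h3 : 3 ≤ (u.cycleOf a).support.card
        · rcases H.dichotomy hc with hAll | hAll
          · exact (hAll a ha).symm
          · exfalso
            apply hmem
            have hin : u.cycleOf a ∈ bige := by
              rw [hbige]; exact Finset.mem_filter.mpr ⟨hc, h3⟩
            exact Finset.mem_filter.mpr ⟨hin, hAll⟩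
        · have hshort := short_eq hc (by omega) ha
          rcases H.choice a with h | h
          · exact h.symm
          · exact (h.trans hshort).symm
      · have hfix : u a = a := by rwa [← Perm.notMem_support]
        have hinv : u⁻¹ a = a := Perm.inv_eq_iff_eq.mpr hfix.symm
        have hpair := H a
        rw [hfix, hinv] at hpair
        rcases pair_eq hpair with ⟨h, -⟩ | ⟨h, -⟩
        · exact hfix.trans h.symm
        · exact hfix.trans h.symm
  · -- right inverse : T (flipped u T) = T
    intro T hT
    have hT' : T ⊆ bige := Finset.mem_powerset.mp hT
    ext c
    simp only [Finset.mem_filter]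
    constructor
    · rintro ⟨hcb, hall⟩
      rw [hbige] at hcb
      have hc : c ∈ u.cycleFactorsFinset := (Finset.mem_filter.mp hcb).1
      have h3 : 3 ≤ c.support.card := (Finset.mem_filter.mp hcb).2
      obtain ⟨a, ha⟩ : c.support.Nonempty := by
        rw [← Finset.card_pos]; omega
      have hco : c = u.cycleOf a := cycle_is_cycleOf ha hc
      have hne := big_ne hc h3 ha
      by_contra hcT
      have hfa : flipped u T a = u a := by
        rw [flipped_apply, if_neg (fun hm => hcT (by rwa [hco]))]
      exact hne (by rw [← hall a ha, hfa])
    · intro hcT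
      have hcb : c ∈ bige := hT' hcT
      refine ⟨hcb, fun a ha => ?_⟩
      have hco : c = u.cycleOf a :=
        cycle_is_cycleOf ha (by rw [hbige] at hcb; exact (Finset.mem_filter.mp hcb).1)
      rw [flipped_apply, if_pos (by rw [← hco]; exact hcT)]
end
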